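/- Let m, ε, x₀, y₀, z₀ be real numbers with 0 < m < 2, and set ξ_m = √(4 − m²)/2. Define z(t) = z₀ + ε·t and x_L(t) = z(t) − m·ε + e^{−(m/2)t}·[ (x₀ − z₀ + m·ε)·cos(ξ_m t) + ((−m·(z₀ − m·ε + x₀) − 2·(y₀ + ε))/√(4 − m²))·sin(ξ_m t) ], y_L(t) = −m·(z(t) − m·ε) − ε + e^{−(m/2)t}·[ (m·(z₀ − m·ε) + (y₀ + ε))·cos(ξ_m t) + ((m²·(z₀ − m·ε) + m·(y₀ + ε) + 2·(x₀ − z₀ + m·ε))/√(4 − m²))·sin(ξ_m t) ]. Then (x_L, y_L, z) satisfies x_L(0) = x₀, y_L(0) = y₀, z(0) = z₀, and for all t ∈ ℝ: x_L′(t) = −m·x_L(t) − y_L(t), y_L′(t) = x_L(t) − z(t), z′(t) = ε. -/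

import Mathlib

private lemma aux_deriv (m ξ c d A B : ℝ) (t : ℝ) :
    HasDerivAt (fun t => c + d * t +
        Real.exp (-(m / 2) * t) * (A * Real.cos (ξ * t) + B * Real.sin (ξ * t)))
      (d + Real.exp (-(m / 2) * t) *
        ((-(m / 2) * A + ξ * B) * Real.cos (ξ * t) +
          (-(m / 2) * B - ξ * A) * Real.sin (ξ * t))) t := by
  have he : HasDerivAt (fun t : ℝ => Real.exp (-(m / 2) * t))
      (Real.exp (-(m / 2) * t) * (-(m / 2))) t := by
    simpa using ((hasDerivAt_id t).const_mul (-(m / 2))).exp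
  have hc : HasDerivAt (fun t : ℝ => Real.cos (ξ * t)) (-Real.sin (ξ * t) * ξ) t := by
    simpa using ((hasDerivAt_id t).const_mul ξ).cos
  have hs : HasDerivAt (fun t : ℝ => Real.sin (ξ * t)) (Real.cos (ξ * t) * ξ) t := by
    simpa using ((hasDerivAt_id t).const_mul ξ).sin
  have htrig : HasDerivAt (fun t : ℝ => A * Real.cos (ξ * t) + B * Real.sin (ξ * t))
      (A * (-Real.sin (ξ * t) * ξ) + B * (Real.cos (ξ * t) * ξ)) t :=
    (hc.const_mul A).add (hs.const_mul B)
  have h := ((hasDerivAt_const t c).add ((hasDerivAt_id t).const_mul d)).add (he.mul htrig)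
  exact h.congr_deriv (by ring)

private lemma coeff1 (m ε x₀ y₀ z₀ s : ℝ) (hsne : s ≠ 0) :
    -(m/2) * (x₀ - z₀ + m * ε) + (s/2) * ((-m * (z₀ - m * ε + x₀) - 2 * (y₀ + ε)) / s)
      = -m * (x₀ - z₀ + m * ε) - (m * (z₀ - m * ε) + (y₀ + ε)) := by
  field_simp; ring

private lemma coeff2 (m ε x₀ y₀ z₀ s : ℝ) (hsne : s ≠ 0) (hs2 : s ^ 2 = 4 - m ^ 2) :
    -(m/2) * ((-m * (z₀ - m * ε + x₀) - 2 * (y₀ + ε)) / s) - (s/2) * (x₀ - z₀ + m * ε)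
      = -m * ((-m * (z₀ - m * ε + x₀) - 2 * (y₀ + ε)) / s)
        - (m ^ 2 * (z₀ - m * ε) + m * (y₀ + ε) + 2 * (x₀ - z₀ + m * ε)) / s := by
  field_simp; linear_combination (-(x₀ - z₀ + m * ε)) * hs2

private lemma coeff3 (m ε x₀ y₀ z₀ s : ℝ) (hsne : s ≠ 0) :
    -(m/2) * (m * (z₀ - m * ε) + (y₀ + ε)) +
      (s/2) * ((m ^ 2 * (z₀ - m * ε) + m * (y₀ + ε) + 2 * (x₀ - z₀ + m * ε)) / s)
      = x₀ - z₀ + m * ε := by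
  field_simp; ring

private lemma coeff4 (m ε x₀ y₀ z₀ s : ℝ) (hsne : s ≠ 0) (hs2 : s ^ 2 = 4 - m ^ 2) :
    -(m/2) * ((m ^ 2 * (z₀ - m * ε) + m * (y₀ + ε) + 2 * (x₀ - z₀ + m * ε)) / s) -
      (s/2) * (m * (z₀ - m * ε) + (y₀ + ε))
      = (-m * (z₀ - m * ε + x₀) - 2 * (y₀ + ε)) / s := by
  field_simp
  linear_combination (-(m * (z₀ - m * ε) + (y₀ + ε))) * hs2

/-- the explicit expressions `(x_L, y_L, z)` solve the left-region
linear system `x' = -m·x - y`, `y' = x - z`, `z' = ε` with initial condition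
`(x₀, y₀, z₀)`. -/
theorem stmt2 (m ε x₀ y₀ z₀ : ℝ) (hm0 : 0 < m) (hm2 : m < 2)
    (ξ : ℝ) (hξ : ξ = Real.sqrt (4 - m ^ 2) / 2)
    (z xL yL : ℝ → ℝ)
    (hz : ∀ t, z t = z₀ + ε * t)
    (hx : ∀ t, xL t = z t - m * ε +
      Real.exp (-(m / 2) * t) *
        ((x₀ - z₀ + m * ε) * Real.cos (ξ * t) +
          ((-m * (z₀ - m * ε + x₀) - 2 * (y₀ + ε)) / Real.sqrt (4 - m ^ 2)) *
            Real.sin (ξ * t)))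
    (hy : ∀ t, yL t = -m * (z t - m * ε) - ε +
      Real.exp (-(m / 2) * t) *
        ((m * (z₀ - m * ε) + (y₀ + ε)) * Real.cos (ξ * t) +
          ((m ^ 2 * (z₀ - m * ε) + m * (y₀ + ε) + 2 * (x₀ - z₀ + m * ε)) /
              Real.sqrt (4 - m ^ 2)) *
            Real.sin (ξ * t))) :
    xL 0 = x₀ ∧ yL 0 = y₀ ∧ z 0 = z₀ ∧
    ∀ t : ℝ,
      HasDerivAt xL (-m * xL t - yL t) t ∧
      HasDerivAt yL (xL t - z t) t ∧
      HasDerivAt z ε t := by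
  have h4 : (0:ℝ) < 4 - m ^ 2 := by nlinarith
  set s := Real.sqrt (4 - m ^ 2) with hsdef
  have hs2 : s ^ 2 = 4 - m ^ 2 := Real.sq_sqrt (le_of_lt h4)
  have hsne : s ≠ 0 := by positivity
  refine ⟨?_, ?_, ?_, ?_⟩
  · simp [hx, hz]
  · simp [hy, hz]; ring
  · simp [hz]
  · intro t
    have hxf : xL = fun t => (z₀ - m * ε) + ε * t +
        Real.exp (-(m / 2) * t) *
          ((x₀ - z₀ + m * ε) * Real.cos (ξ * t) +
            ((-m * (z₀ - m * ε + x₀) - 2 * (y₀ + ε)) / s) * Real.sin (ξ * t)) :=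
      funext fun t => by rw [hx t, hz t]; ring
    have hyf : yL = fun t => (-m * (z₀ - m * ε) - ε) + (-(m * ε)) * t +
        Real.exp (-(m / 2) * t) *
          ((m * (z₀ - m * ε) + (y₀ + ε)) * Real.cos (ξ * t) +
            ((m ^ 2 * (z₀ - m * ε) + m * (y₀ + ε) + 2 * (x₀ - z₀ + m * ε)) / s) *
              Real.sin (ξ * t)) :=
      funext fun t => by rw [hy t, hz t]; ring
    refine ⟨?_, ?_, ?_⟩
    · have h1 := aux_deriv m ξ (z₀ - m * ε) ε (x₀ - z₀ + m * ε)
        ((-m * (z₀ - m * ε + x₀) - 2 * (y₀ + ε)) / s) t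
      rw [← hxf] at h1
      convert h1 using 1
      rw [hx t, hy t, hz t, hξ]
      have hc1 := coeff1 m ε x₀ y₀ z₀ s hsne
      have hc2 := coeff2 m ε x₀ y₀ z₀ s hsne hs2
      linear_combination
        -(Real.exp (-(m / 2) * t) * Real.cos (s / 2 * t)) * hc1 -
        (Real.exp (-(m / 2) * t) * Real.sin (s / 2 * t)) * hc2
    · have h1 := aux_deriv m ξ (-m * (z₀ - m * ε) - ε) (-(m * ε))
        (m * (z₀ - m * ε) + (y₀ + ε))
        ((m ^ 2 * (z₀ - m * ε) + m * (y₀ + ε) + 2 * (x₀ - z₀ + m * ε)) / s) t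
      rw [← hyf] at h1
      convert h1 using 1
      rw [hx t, hz t, hξ]
      have hc3 := coeff3 m ε x₀ y₀ z₀ s hsne
      have hc4 := coeff4 m ε x₀ y₀ z₀ s hsne hs2
      linear_combination
        -(Real.exp (-(m / 2) * t) * Real.cos (s / 2 * t)) * hc3 -
        (Real.exp (-(m / 2) * t) * Real.sin (s / 2 * t)) * hc4
    · have h0 : HasDerivAt (fun t : ℝ => z₀ + ε * t) ε t := by
        exact ((hasDerivAt_const t z₀).add ((hasDerivAt_id t).const_mul ε)).congr_deriv (by ring)
      rw [show z = fun t => z₀ + ε * t from funext hz]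
      exact h0
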